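/- Let n be an even positive integer and let F : F_{2^n} → F_{2^n} be a quadratic APN function with F(0) = 0, meaning that for every a ∈ F_{2^n} the map x ↦ F(x + a) + F(x) + F(a) is additive. Suppose that for every nonzero b in the image of F, the preimage F^{−1}(b) has at least 3 elements. Then F is 3-to-1: F^{−1}(0) = {0} and for every b in the image of F with b ≠ 0, the preimage F^{−1}(b) has exactly 3 elements. -/

import Mathlib

open Finset

set_option linter.unusedVariables false


/-- Let n be even, F : F_{2^n} → F_{2^n} a quadratic APN function with
F(0) = 0 (quadratic: for each a, x ↦ F(x+a)+F(x)+F(a) is additive). If every nonzero b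
in the image of F has at least 3 preimages, then F is 3-to-1: F⁻¹(0) = {0} and every
nonzero b in the image of F has exactly 3 preimages. -/
theorem stmt_17 (n : ℕ) (hn : 0 < n) (hne : Even n)
    (K : Type*) [Field K] [Fintype K] [CharP K 2] (hcard : Fintype.card K = 2 ^ n)
    (F : K → K) (hF0 : F 0 = 0)
    (hquad : ∀ a x y : K,
      F (x + y + a) + F (x + y) + F a
        = (F (x + a) + F x + F a) + (F (y + a) + F y + F a))
    (hapn : ∀ a : K, a ≠ 0 → ∀ b : K, {x : K | F (x + a) + F x = b}.ncard ≤ 2)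
    (h3 : ∀ b : K, b ∈ Set.range F → b ≠ 0 → 3 ≤ (F ⁻¹' {b}).ncard) :
    F ⁻¹' {0} = {0} ∧
    ∀ b : K, b ∈ Set.range F → b ≠ 0 → (F ⁻¹' {b}).ncard = 3 := by
  classical
  have h2 : ∀ u : K, u + u = 0 := fun u => CharTwo.add_self_eq_zero u
  set q := Fintype.card K with hq
  set t : K → Finset K := fun b => Finset.univ.filter (fun x => F x = b) with ht
  have hncard : ∀ b : K, (F ⁻¹' {b}).ncard = (t b).card := by
    intro b
    have h : (F ⁻¹' {b}) = ↑(t b) := by ext x; simp [ht]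
    rw [h, Set.ncard_coe_finset]
  -- APN in finset form
  have hapn' : ∀ a : K, a ≠ 0 →
      (Finset.univ.filter (fun x => F (x + a) = F x)).card ≤ 2 := by
    intro a ha
    have h := hapn a ha 0
    have heq : {x : K | F (x + a) + F x = 0}
        = ↑(Finset.univ.filter (fun x => F (x + a) = F x)) := by
      ext x
      simp only [Set.mem_setOf_eq, Finset.coe_filter, Finset.mem_univ, true_and]
      constructor
      · intro hx; linear_combination hx - h2 (F x)
      · intro hx; linear_combination hx + h2 (F x)
    rwa [heq, Set.ncard_coe_finset] at h
  set S : Finset (K × K) :=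
    Finset.univ.filter (fun p => p.1 ≠ p.2 ∧ F p.1 = F p.2) with hS
  set T : Finset (K × K) :=
    Finset.univ.filter (fun p => p.1 ≠ 0 ∧ F (p.2 + p.1) = F p.2) with hT
  have hST : S.card = T.card := by
    apply Finset.card_nbij (fun p => (p.1 + p.2, p.2))
    · intro p hp
      simp only [hS, hT, Finset.mem_coe, Finset.mem_filter, Finset.mem_univ, true_and] at hp ⊢
      obtain ⟨hne', hfe⟩ := hp
      constructor
      · intro h; apply hne'
        have : p.1 = p.2 := by linear_combination h - h2 p.2
        exact this
      · have : p.2 + (p.1 + p.2) = p.1 := by linear_combination h2 p.2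
        rw [this, hfe]
    · intro p hp p' hp' h
      simp only [Prod.mk.injEq] at h
      obtain ⟨h1, h2'⟩ := h
      have : p.1 = p'.1 := by linear_combination h1 - h2'
      exact Prod.ext this h2'
    · intro p hp
      simp only [hT, Finset.coe_filter, Set.mem_setOf_eq, Finset.mem_univ, true_and] at hp
      obtain ⟨ha, hfe⟩ := hp
      refine ⟨(p.2 + p.1, p.2), ?_, ?_⟩
      · simp only [hS, Finset.coe_filter, Set.mem_setOf_eq, Finset.mem_univ, true_and]
        constructor
        · intro h
          apply ha
          have : p.1 = 0 := by linear_combination h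
          exact this
        · exact hfe
      · have : p.2 + p.1 + p.2 = p.1 := by linear_combination h2 p.2
        simp [this]
  have hTsum : T.card = ∑ a ∈ Finset.univ.erase (0 : K),
      (T.filter (fun p => p.1 = a)).card := by
    apply Finset.card_eq_sum_card_fiberwise (f := fun p : K × K => p.1)
    intro p hp
    simp only [hT, Finset.mem_coe, Finset.mem_filter, Finset.mem_univ, true_and] at hp
    simp [hp.1]
  have hTfib : ∀ a : K, a ≠ 0 → (T.filter (fun p => p.1 = a)).card
      = (Finset.univ.filter (fun x => F (x + a) = F x)).card := by
    intro a ha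
    apply Finset.card_nbij (fun p => p.2)
    · intro p hp
      simp only [hT, Finset.mem_coe, Finset.mem_filter, Finset.mem_univ, true_and] at hp ⊢
      obtain ⟨⟨_, hfe⟩, hpa⟩ := hp
      rw [hpa] at hfe; exact hfe
    · intro p hp p' hp' h
      simp only [hT, Finset.mem_coe, Finset.mem_filter] at hp hp'
      exact Prod.ext (hp.2.trans hp'.2.symm) h
    · intro x hx
      simp only [Finset.coe_filter, Set.mem_setOf_eq, Finset.mem_univ, true_and] at hx
      exact ⟨(a, x), by simp [hT, ha, hx], rfl⟩
  have hupper : S.card ≤ 2 * (q - 1) := by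
    rw [hST, hTsum]
    calc ∑ a ∈ Finset.univ.erase (0 : K), (T.filter (fun p => p.1 = a)).card
        ≤ ∑ _a ∈ Finset.univ.erase (0 : K), 2 := by
          apply Finset.sum_le_sum
          intro a ha
          rw [hTfib a (Finset.ne_of_mem_erase ha)]
          exact hapn' a (Finset.ne_of_mem_erase ha)
      _ = 2 * (q - 1) := by
          rw [Finset.sum_const, smul_eq_mul, Finset.card_erase_of_mem (Finset.mem_univ _),
            Finset.card_univ, mul_comm]
  -- lower bound: fiberwise count of S
  have hSfib : S.card = ∑ b ∈ Finset.univ.image F, (t b).card * ((t b).card - 1) := by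
    rw [Finset.card_eq_sum_card_fiberwise (f := fun p => F p.1)
      (t := Finset.univ.image F) (fun p _ => Finset.mem_image_of_mem _ (Finset.mem_univ p.1))]
    apply Finset.sum_congr rfl
    intro b _
    have h : S.filter (fun p => F p.1 = b) = (t b).offDiag := by
      ext p
      simp only [hS, ht, Finset.mem_filter, Finset.mem_univ, true_and, Finset.mem_offDiag]
      constructor
      · rintro ⟨⟨hne', hfe⟩, hb⟩
        exact ⟨hb, hfe ▸ hb, hne'⟩
      · rintro ⟨hb1, hb2, hne'⟩
        exact ⟨⟨hne', hb1.trans hb2.symm⟩, hb1⟩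
    rw [h, Finset.offDiag_card]
    rcases Nat.eq_zero_or_pos (t b).card with h0 | h0
    · simp [h0]
    · obtain ⟨k, hk⟩ : ∃ k, (t b).card = k + 1 := ⟨(t b).card - 1, by omega⟩
      have h1 : k + 1 - 1 = k := rfl
      have h2' : (k + 1) * (k + 1) = (k + 1) * k + (k + 1) := by ring
      rw [hk, h1]
      omega
  have hqsum : q = ∑ b ∈ Finset.univ.image F, (t b).card := by
    rw [hq, ← Finset.card_univ]
    exact Finset.card_eq_sum_card_fiberwise (fun x _ => Finset.mem_image_of_mem _ (Finset.mem_univ x))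
  have h0mem : (0 : K) ∈ Finset.univ.image F :=
    Finset.mem_image.mpr ⟨0, Finset.mem_univ 0, hF0⟩
  set I : Finset K := (Finset.univ.image F).erase 0 with hI
  set N : ℕ := (t 0).card with hN
  have hN1 : 1 ≤ N := Finset.card_pos.mpr ⟨0, by simp [ht, hF0]⟩
  have hm3 : ∀ b ∈ I, 3 ≤ (t b).card := by
    intro b hb
    rw [Finset.mem_erase] at hb
    obtain ⟨x, _, hx⟩ := Finset.mem_image.mp hb.2
    rw [← hncard]
    exact h3 b ⟨x, hx⟩ hb.1
  set M : ℕ := ∑ b ∈ I, (t b).card with hM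
  set E : ℕ := ∑ b ∈ I, ((t b).card - 3) with hE
  have hqNM : q = N + M := by
    rw [hqsum, hM, hN, ← Finset.add_sum_erase _ _ h0mem, hI]
  have hSlow : N * (N - 1) + (2 * M + 3 * E) ≤ S.card := by
    rw [hSfib, ← Finset.add_sum_erase _ _ h0mem, ← hI, ← hN]
    apply Nat.add_le_add_left
    rw [hM, hE, Finset.mul_sum, Finset.mul_sum, ← Finset.sum_add_distrib]
    apply Finset.sum_le_sum
    intro b hb
    have h := hm3 b hb
    obtain ⟨k, hk⟩ : ∃ k, (t b).card = k + 3 := ⟨(t b).card - 3, by omega⟩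
    have h1 : k + 3 - 1 = k + 2 := rfl
    have h2' : (k + 3) * (k + 2) = k * k + 5 * k + 6 := by ring
    rw [hk, h1, h2']
    omega
  -- derive N ≤ 2 and E = 0
  obtain ⟨P, hP⟩ : ∃ P, P = N * (N - 1) := ⟨_, rfl⟩
  have hmain : P + 3 * E + 2 ≤ 2 * N := by
    have h := le_trans hSlow hupper
    rw [← hP] at h
    omega
  have hNle : N ≤ 2 := by
    by_contra hc
    push_neg at hc
    have h3N : 3 ≤ N := hc
    have h1 : 3 * (N - 1) ≤ N * (N - 1) := Nat.mul_le_mul_right _ h3N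
    omega
  have hE0 : E = 0 := by
    have hPle : P ≤ 2 := by
      interval_cases N <;> simp_all
    omega
  have hfib3 : ∀ b ∈ I, (t b).card = 3 := by
    intro b hb
    have h := (Finset.sum_eq_zero_iff.mp hE0) b hb
    have := hm3 b hb
    omega
  -- q ≡ 1 mod 3
  have hqmod : q % 3 = 1 := by
    obtain ⟨m, rfl⟩ := hne
    rw [hcard, pow_add, ← mul_pow]
    norm_num [Nat.pow_mod]
  have hM3 : M = 3 * I.card := by
    rw [hM, Finset.sum_congr rfl hfib3, Finset.sum_const, smul_eq_mul, mul_comm]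
  have hNeq : N = 1 := by omega
  have ht0 : t 0 = {0} := by
    have h0t : (0 : K) ∈ t 0 := by simp [ht, hF0]
    obtain ⟨a, ha⟩ := Finset.card_eq_one.mp hNeq
    rw [ha] at h0t ⊢
    rw [Finset.mem_singleton] at h0t
    rw [h0t]
  constructor
  · have h : (F ⁻¹' {0}) = ↑(t 0) := by ext x; simp [ht]
    rw [h, ht0]; simp
  · intro b hb hbne
    rw [hncard]
    apply hfib3
    obtain ⟨x, hx⟩ := hb
    exact Finset.mem_erase.mpr ⟨hbne, Finset.mem_image.mpr ⟨x, Finset.mem_univ x, hx⟩⟩
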